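/- Let n be a positive integer and let m = (m₁, m₂, …, m_n) be an n-tuple of integers with every m_i ≥ 2. Then |E(m)| ≤ 2^{40} · (|m| − 1)!. -/

import Mathlib

open Nat Finset

attribute [local instance] Classical.propDecidable

/-- The series `ζ(k) = Σ_{j=1}^∞ j^{−k}` (convergent for `k ≥ 2`). -/
noncomputable def zetaSeries (k : ℤ) : ℝ :=
  ∑' j : ℕ, ((j : ℝ) + 1) ^ (-k)

/-- `𝔷(k) = (2 − 2^{2−k}) ζ(k)` for even integers `k ≥ 2`, `𝔷(0) = 1`, and `𝔷(k) = 0`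
for all other integers `k` (in particular for odd or negative `k`). -/
noncomputable def zed (k : ℤ) : ℝ :=
  if k = 0 then 1
  else if 2 ≤ k ∧ Even k then (2 - (2 : ℝ) ^ (2 - k)) * zetaSeries k
  else 0

/-- `P` is a (reduced) set partition of the finite set `S`: a collection of nonempty
disjoint subsets of `S` whose union is `S` (each element of `S` lies in exactly one
component). -/
def IsSetPartitionOn {ι : Type*} [DecidableEq ι] (S : Finset ι) (P : Finset (Finset ι)) :
    Prop :=
  (∀ s ∈ P, s ⊆ S ∧ s ≠ ∅) ∧ ∀ x ∈ S, ∃! s, s ∈ P ∧ x ∈ s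

/-- The quantity `E(m)` of Eskin–Okounkov, for a weight function `v` on a finite ground
set `S`:
`E = Σ_{P partition of S, ℓ(P) ≥ 2} (−1)^{ℓ(P)−1} (ℓ(P)−2)!
      Σ_{d : P → ℕ, Σ d = ℓ(P)−2} ∏_{s ∈ P} (1/d_s!) · |v_s|! · 𝔷(|v_s| − |s| − d_s + 1)`,
where `|v_s| = Σ_{x ∈ s} v(x)` and `|s|` is the cardinality of the component `s`. -/
noncomputable def Emap {ι : Type*} [Fintype ι] [DecidableEq ι]
    (S : Finset ι) (v : ι → ℕ) : ℝ :=
  ∑ P ∈ Finset.univ.filter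
      (fun P : Finset (Finset ι) => IsSetPartitionOn S P ∧ 2 ≤ P.card),
    (-1 : ℝ) ^ (P.card - 1) * ((P.card - 2)! : ℝ) *
      ∑ d ∈ Finset.finsuppAntidiag P (P.card - 2),
        ∏ s ∈ P,
          (1 / ((d s)! : ℝ) * ((∑ x ∈ s, v x)! : ℝ) *
            zed ((∑ x ∈ s, v x : ℤ) - s.card - d s + 1))

namespace EOaux

def bb (k : ℕ) : ℕ := (2*k).choose k * k !

lemma bb_mul_factorial (k : ℕ) : bb k * k ! = (2*k)! := by
  have h : k ≤ 2*k := by omega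
  have := Nat.choose_mul_factorial_mul_factorial h
  have h2 : 2*k - k = k := by omega
  rw [h2] at this
  simpa [bb, mul_assoc] using this

lemma bb_pos (k : ℕ) : 0 < bb k := by
  have h := bb_mul_factorial k
  by_contra hc
  push_neg at hc
  interval_cases hh : bb k
  · simp at h
    exact absurd h.symm (Nat.factorial_ne_zero _)

lemma bb_succ (k : ℕ) : bb (k+1) = (4*k+2) * bb k := by
  have h1 : bb (k+1) * (k+1)! = (2*(k+1))! := bb_mul_factorial (k+1)
  have h0 : bb k * k ! = (2*k)! := bb_mul_factorial k
  have h2 : (2*(k+1))! = (2*k+2) * ((2*k+1) * (2*k)!) := by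
    have h4 : 2*(k+1) = (2*k+1) + 1 := by ring
    rw [h4, Nat.factorial_succ, Nat.factorial_succ]
  have h3 : bb (k+1) * (k+1)! = ((4*k+2) * bb k) * (k+1)! := by
    rw [h1, h2, ← h0, Nat.factorial_succ]
    ring
  exact Nat.eq_of_mul_eq_mul_right (Nat.factorial_pos _) h3

lemma bb_prod_Ico {r m : ℕ} (h : r ≤ m) : bb m = bb r * ∏ j ∈ Ico r m, (4*j+2) := by
  induction m with
  | zero => simp [Nat.le_zero.mp h]
  | succ m ih =>
    rcases Nat.lt_or_ge r (m+1) with hlt | hge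
    · have hrm : r ≤ m := by omega
      rw [Finset.prod_Ico_succ_top hrm, bb_succ, ih hrm]; ring
    · have : r = m+1 := by omega
      simp [this]

/-- key numeric ratio: `2 (2k+1)^k ≤ (2k+3)^k` for `k ≥ 3`. -/
lemma ratio_nat {k : ℕ} (hk : 3 ≤ k) : 2 * (2*k+1)^k ≤ (2*k+3)^k := by
  set a : ℕ := 2*k+1 with ha
  have hexp : (a + 2)^k = ∑ i ∈ range (k+1), a ^ i * 2 ^ (k - i) * k.choose i :=
    add_pow a 2 k
  have hsub : ({k-2, k-1, k} : Finset ℕ) ⊆ range (k+1) := by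
    intro x hx
    simp only [Finset.mem_insert, Finset.mem_singleton] at hx
    simp only [Finset.mem_range]
    omega
  have hsum : ∑ i ∈ ({k-2, k-1, k} : Finset ℕ), a ^ i * 2 ^ (k - i) * k.choose i
      ≤ (a+2)^k := by
    rw [hexp]
    exact Finset.sum_le_sum_of_subset hsub
  have hne1 : (k-2 : ℕ) ≠ k-1 := by omega
  have hne2 : (k-2 : ℕ) ≠ k := by omega
  have hne3 : (k-1 : ℕ) ≠ k := by omega
  rw [Finset.sum_insert (by simp [hne1, hne2]), Finset.sum_insert (by simp [hne3]),
    Finset.sum_singleton] at hsum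
  rw [show k - (k-2) = 2 by omega, show k - (k-1) = 1 by omega, Nat.sub_self] at hsum
  have hck : k.choose k = 1 := Nat.choose_self k
  have hc1 : k.choose (k-1) = k := by
    have h := Nat.choose_symm (show k-1 ≤ k by omega)
    rw [show k - (k-1) = 1 by omega, Nat.choose_one_right] at h
    exact h.symm
  have hc2 : 2 * k.choose (k-2) = k * (k-1) := by
    have hsymm : k.choose (k-2) = k.choose 2 := Nat.choose_symm (show 2 ≤ k by omega)
    have hfac := Nat.choose_mul_factorial_mul_factorial (show 2 ≤ k by omega)
    have hk2 : k ! = k * ((k-1) * (k-2)!) := by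
      rw [show k = (k-2) + 1 + 1 by omega, Nat.factorial_succ, Nat.factorial_succ]
      have e1 : k - 2 + 1 + 1 = k := by omega
      have e2 : k - 2 + 1 = k - 1 := by omega
      rw [e1, e2]
    rw [hk2] at hfac
    have : (k.choose 2 * 2) * (k-2)! = (k * (k-1)) * (k-2)! := by
      have h2f : (2:ℕ)! = 2 := rfl
      calc (k.choose 2 * 2) * (k-2)! = k.choose 2 * 2! * (k-2)! := by rw [h2f]
        _ = k * ((k-1) * (k-2)!) := hfac
        _ = (k * (k-1)) * (k-2)! := by ring
    have := Nat.eq_of_mul_eq_mul_right (Nat.factorial_pos (k-2)) this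
    rw [hsymm]; omega
  rw [hck, hc1] at hsum
  have hpow2 : a^k = a^(k-2) * a^2 := by rw [← pow_add]; congr 1; omega
  have hpow1 : a^(k-1) = a^(k-2) * a := by rw [← pow_succ]; congr 1; omega
  have key : a^2 ≤ 2 * (k * (k-1)) + 2*k*a := by
    obtain ⟨k1, rfl⟩ : ∃ k1, k = k1 + 3 := ⟨k-3, by omega⟩
    have e : k1 + 3 - 1 = k1 + 2 := by omega
    rw [ha, e]
    nlinarith [sq_nonneg k1]
  have h4c : a ^ (k-2) * 2 ^ 2 * k.choose (k - 2) = a^(k-2) * (2 * (k*(k-1))) := by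
    rw [show (2:ℕ)^2 = 4 by norm_num]
    calc a ^ (k-2) * 4 * k.choose (k-2) = a^(k-2) * (2 * (2 * k.choose (k-2))) := by ring
      _ = a^(k-2) * (2 * (k*(k-1))) := by rw [hc2]
  calc 2 * (2*k+1)^k = a^k + a^k := by rw [← ha]; ring
    _ = a^(k-2) * a^2 + a^k := by rw [← hpow2]
    _ ≤ (a^(k-2) * (2 * (k*(k-1))) + a^(k-2) * a * (2*k)) + a^k := by
        have : a^(k-2) * a^2 ≤ a^(k-2) * (2 * (k*(k-1))) + a^(k-2) * a * (2*k) := by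
          calc a^(k-2) * a^2 ≤ a^(k-2) * (2 * (k * (k-1)) + 2*k*a) :=
                Nat.mul_le_mul_left _ key
            _ = a^(k-2) * (2 * (k*(k-1))) + a^(k-2) * a * (2*k) := by ring
        omega
    _ = a ^ (k-2) * 2 ^ 2 * k.choose (k - 2) + (a ^ (k-1) * 2 ^ 1 * k + a ^ k * 2 ^ 0 * 1) := by
        rw [h4c, hpow1]; ring
    _ ≤ (a+2)^k := hsum
    _ = (2*k+3)^k := by rw [ha]

/-- the real weight `u k = bb k / (4k+2)^(k-1)`. -/
noncomputable def uu (k : ℕ) : ℝ := (bb k : ℝ) / ((4*k+2 : ℕ) : ℝ)^(k-1)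

lemma uu_nonneg (k : ℕ) : 0 ≤ uu k := by
  unfold uu; positivity

lemma uu_ratio {k : ℕ} (hk : 3 ≤ k) : 2 * uu (k+1) ≤ uu k := by
  unfold uu
  rw [bb_succ k]
  have hb : (0:ℝ) < (bb k : ℝ) := by exact_mod_cast bb_pos k
  have hden1 : (0:ℝ) < ((4*(k+1)+2 : ℕ) : ℝ)^((k+1)-1) := by positivity
  have hden2 : (0:ℝ) < ((4*k+2 : ℕ) : ℝ)^(k-1) := by positivity
  rw [mul_div_assoc', div_le_div_iff₀ hden1 hden2]
  have hkey : 2 * ((4*k+2)^k) ≤ (4*(k+1)+2)^(k) := by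
    have := ratio_nat hk
    calc 2 * (4*k+2)^k = 2 * (2^k * (2*k+1)^k) := by
          rw [← mul_pow]; ring_nf
      _ = 2^k * (2 * (2*k+1)^k) := by ring
      _ ≤ 2^k * (2*k+3)^k := Nat.mul_le_mul_left _ this
      _ = (4*(k+1)+2)^k := by rw [← mul_pow]; ring_nf
  have hkey' : (2:ℝ) * ((4*k+2 : ℕ) : ℝ)^k ≤ ((4*(k+1)+2 : ℕ) : ℝ)^((k+1)-1) := by
    rw [show (k+1)-1 = k by omega]
    exact_mod_cast hkey
  have hpow : ((4*k+2 : ℕ) : ℝ)^k = ((4*k+2 : ℕ) : ℝ)^(k-1) * ((4*k+2:ℕ):ℝ) := by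
    rw [← pow_succ]; congr 1; omega
  calc (2:ℝ) * (((4*k+2) * bb k : ℕ) : ℝ) * ((4*k+2 : ℕ) : ℝ)^(k-1)
      = (bb k : ℝ) * (2 * (((4*k+2:ℕ):ℝ)^(k-1) * ((4*k+2:ℕ):ℝ))) := by
        push_cast; ring
    _ = (bb k : ℝ) * (2 * ((4*k+2 : ℕ) : ℝ)^k) := by rw [← hpow]
    _ ≤ (bb k : ℝ) * ((4*(k+1)+2 : ℕ) : ℝ)^((k+1)-1) :=
        mul_le_mul_of_nonneg_left hkey' (le_of_lt hb)

lemma uu_base : ∀ j : ℕ, (∑ k ∈ Icc 2 (5+j), uu k) + 2 * uu (6+j) ≤ 5/2 := by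
  intro j
  induction j with
  | zero =>
    have h25 : (Icc 2 (5+0) : Finset ℕ) = {2,3,4,5} := rfl
    rw [h25]
    have hb2 : bb 2 = 12 := by decide
    have hb3 : bb 3 = 120 := by decide
    have hb4 : bb 4 = 1680 := by decide
    have hb5 : bb 5 = 30240 := by decide
    have hb6 : bb 6 = 665280 := by decide
    rw [show ({2,3,4,5} : Finset ℕ) = insert 2 (insert 3 (insert 4 ({5} : Finset ℕ))) from rfl]
    rw [Finset.sum_insert (by decide), Finset.sum_insert (by decide),
      Finset.sum_insert (by decide), Finset.sum_singleton]
    norm_num [uu, hb2, hb3, hb4, hb5, hb6]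
  | succ j ih =>
    have hstep : 2 * uu (6+(j+1)) ≤ uu (6+j) := by
      have := uu_ratio (k := 6+j) (by omega)
      simpa [show 6+j+1 = 6+(j+1) by omega] using this
    have hsplit : (∑ k ∈ Icc 2 (5+(j+1)), uu k)
        = (∑ k ∈ Icc 2 (5+j), uu k) + uu (6+j) := by
      have : 5 + (j+1) = (5+j) + 1 := by omega
      rw [this, Finset.sum_Icc_succ_top (by omega), show (5+j)+1 = 6+j by omega]
    rw [hsplit]
    have h6 : uu (6+j) + 2 * uu (6+(j+1)) ≤ 2 * uu (6+j) := by linarith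
    linarith

lemma uu_sum (m : ℕ) : (∑ k ∈ Icc 2 m, uu k) ≤ 5/2 := by
  rcases Nat.le_total m 5 with h | h
  · have hsub : Icc 2 m ⊆ Icc 2 5 := by
      apply Finset.Icc_subset_Icc le_rfl h
    have h1 : (∑ k ∈ Icc 2 m, uu k) ≤ ∑ k ∈ Icc 2 5, uu k :=
      Finset.sum_le_sum_of_subset_of_nonneg hsub (fun i _ _ => uu_nonneg i)
    have h2 := uu_base 0
    have h3 : 0 ≤ 2 * uu (6+0) := by
      have := uu_nonneg (6+0); linarith
    simp only [Nat.add_zero] at h2 ⊢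
    linarith
  · obtain ⟨j, rfl⟩ : ∃ j, m = 5 + j := ⟨m - 5, by omega⟩
    have h2 := uu_base j
    have h3 : 0 ≤ 2 * uu (6+j) := by
      have := uu_nonneg (6+j); linarith
    linarith

lemma PL {S : ℕ} (hS : 2 ≤ S) :
    ∑ k ∈ Icc 1 (S-1), bb k * bb (S-k) ≤ 9 * bb (S-1) := by
  set m := S/2 with hm
  have hm1 : 1 ≤ m := by omega
  have hm2 : m ≤ S-1 := by omega
  have hcast : ((∑ k ∈ Icc 1 (S-1), bb k * bb (S-k) : ℕ) : ℝ)
      ≤ ((9 * bb (S-1) : ℕ) : ℝ) → ∑ k ∈ Icc 1 (S-1), bb k * bb (S-k) ≤ 9 * bb (S-1) :=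
    fun h => by exact_mod_cast h
  apply hcast
  push_cast
  set t : ℕ → ℝ := fun k => (bb k : ℝ) * (bb (S-k) : ℝ) with ht
  have htnonneg : ∀ k, 0 ≤ t k := fun k => by
    simp only [ht]; positivity
  have hsplit : ∑ k ∈ Icc 1 (S-1), t k = (∑ k ∈ Icc 1 m, t k) + ∑ k ∈ Icc (m+1) (S-1), t k := by
    have e1 : (Icc 1 (S-1) : Finset ℕ) = Ioc 0 (S-1) := by ext x; simp [Finset.mem_Icc, Finset.mem_Ioc]; omega
    have e2 : (Icc 1 m : Finset ℕ) = Ioc 0 m := by ext x; simp [Finset.mem_Icc, Finset.mem_Ioc]; omega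
    have e3 : (Icc (m+1) (S-1) : Finset ℕ) = Ioc m (S-1) := by ext x; simp [Finset.mem_Icc, Finset.mem_Ioc]
    rw [e1, e2, e3]
    exact (Finset.sum_Ioc_consecutive _ (by omega) (by omega)).symm
  have hrefl : ∑ k ∈ Icc (m+1) (S-1), t k = ∑ k ∈ Icc 1 (S-m-1), t k := by
    apply Finset.sum_nbij' (i := fun k => S - k) (j := fun k => S - k)
    · intro a ha
      simp only [Finset.mem_Icc] at ha ⊢
      omega
    · intro a ha
      simp only [Finset.mem_Icc] at ha ⊢
      omega
    · intro a ha
      simp only [Finset.mem_Icc] at ha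
      omega
    · intro a ha
      simp only [Finset.mem_Icc] at ha
      omega
    · intro a ha
      simp only [Finset.mem_Icc] at ha
      simp only [ht]
      rw [show S - (S - a) = a by omega]
      ring
  have hsub2 : ∑ k ∈ Icc 1 (S-m-1), t k ≤ ∑ k ∈ Icc 1 m, t k := by
    apply Finset.sum_le_sum_of_subset_of_nonneg
    · apply Finset.Icc_subset_Icc le_rfl (by omega)
    · exact fun i _ _ => htnonneg i
  have hinsert : (Icc 1 m : Finset ℕ) = insert 1 (Icc 2 m) := by
    ext x
    simp only [Finset.mem_Icc, Finset.mem_insert]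
    omega
  have h1notin : (1:ℕ) ∉ Icc 2 m := by simp
  have hbb1 : bb 1 = 2 := by decide
  have hperk : ∀ k ∈ Icc 2 m, t k ≤ uu k * (bb (S-1) : ℝ) := by
    intro k hk
    simp only [Finset.mem_Icc] at hk
    have hkS : 2*k ≤ S := by omega
    have hprod := bb_prod_Ico (show S-k ≤ S-1 by omega)
    have hcard : (Ico (S-k) (S-1)).card = k-1 := by
      rw [Nat.card_Ico]; omega
    have hpow : (4*k+2)^(k-1) ≤ ∏ j ∈ Ico (S-k) (S-1), (4*j+2) := by
      calc (4*k+2)^(k-1) = ∏ _j ∈ Ico (S-k) (S-1), (4*k+2) := by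
            rw [Finset.prod_const, hcard]
        _ ≤ ∏ j ∈ Ico (S-k) (S-1), (4*j+2) := by
            apply Finset.prod_le_prod' 
            intro j hj
            simp only [Finset.mem_Ico] at hj
            omega
    have hBB : bb (S-k) * (4*k+2)^(k-1) ≤ bb (S-1) := by
      rw [hprod]
      exact Nat.mul_le_mul_left _ hpow
    have hdenpos : (0:ℝ) < ((4*k+2 : ℕ):ℝ)^(k-1) := by positivity
    simp only [ht, uu]
    rw [div_mul_eq_mul_div, le_div_iff₀ hdenpos]
    have : ((bb (S-k) : ℕ):ℝ) * ((4*k+2 : ℕ):ℝ)^(k-1) ≤ (bb (S-1) : ℝ) := by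
      exact_mod_cast hBB
    calc (bb k : ℝ) * (bb (S-k):ℝ) * ((4*k+2:ℕ):ℝ)^(k-1)
        = (bb k : ℝ) * ((bb (S-k):ℝ) * ((4*k+2:ℕ):ℝ)^(k-1)) := by ring
      _ ≤ (bb k : ℝ) * (bb (S-1):ℝ) := by
          apply mul_le_mul_of_nonneg_left this (by positivity)
  have hmid : ∑ k ∈ Icc 2 m, t k ≤ (5/2) * (bb (S-1) : ℝ) := by
    calc ∑ k ∈ Icc 2 m, t k ≤ ∑ k ∈ Icc 2 m, uu k * (bb (S-1) : ℝ) :=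
          Finset.sum_le_sum hperk
      _ = (∑ k ∈ Icc 2 m, uu k) * (bb (S-1) : ℝ) := by rw [Finset.sum_mul]
      _ ≤ (5/2) * (bb (S-1) : ℝ) := by
          apply mul_le_mul_of_nonneg_right (uu_sum m) (by positivity)
  have honehalf : ∑ k ∈ Icc 1 m, t k ≤ (9/2) * (bb (S-1) : ℝ) := by
    rw [hinsert, Finset.sum_insert h1notin]
    have ht1 : t 1 = 2 * (bb (S-1) : ℝ) := by
      simp only [ht, hbb1]
      push_cast
      ring
    rw [ht1]
    linarith
  calc ∑ k ∈ Icc 1 (S-1), t k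
      = (∑ k ∈ Icc 1 m, t k) + ∑ k ∈ Icc (m+1) (S-1), t k := hsplit
    _ ≤ (∑ k ∈ Icc 1 m, t k) + ∑ k ∈ Icc 1 m, t k := by
        rw [hrefl]
        linarith [hsub2]
    _ ≤ (9/2) * (bb (S-1) : ℝ) + (9/2) * (bb (S-1) : ℝ) := by linarith
    _ = 9 * (bb (S-1) : ℝ) := by ring

def T : ℕ → ℕ → ℕ
  | N, 0 => if N = 0 then 1 else 0
  | N, (ℓ+1) => ∑ k ∈ Icc 1 N, bb k * T (N-k) ℓ

lemma T_lt_zero : ∀ {ℓ N : ℕ}, N < ℓ → T N ℓ = 0 := by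
  intro ℓ
  induction ℓ with
  | zero => intro N h; omega
  | succ ℓ ih =>
    intro N h
    show (∑ k ∈ Icc 1 N, bb k * T (N-k) ℓ) = 0
    apply Finset.sum_eq_zero
    intro k hk
    simp only [Finset.mem_Icc] at hk
    rw [ih (show N - k < ℓ by omega)]
    ring

lemma T_one {N : ℕ} (h : 1 ≤ N) : T N 1 = bb N := by
  show (∑ k ∈ Icc 1 N, bb k * T (N-k) 0) = bb N
  rw [Finset.sum_eq_single N]
  · show bb N * (if N - N = 0 then 1 else 0) = bb N
    simp
  · intro k hk hkne
    simp only [Finset.mem_Icc] at hk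
    show bb k * (if N - k = 0 then 1 else 0) = 0
    rw [if_neg (by omega)]
    ring
  · intro hN
    simp only [Finset.mem_Icc] at hN
    omega

lemma T_le : ∀ {ℓ N : ℕ}, 1 ≤ ℓ → ℓ ≤ N → T N ℓ ≤ 9^(ℓ-1) * bb (N-ℓ+1) := by
  intro ℓ
  induction ℓ with
  | zero => intro N h; omega
  | succ ℓ ih =>
    intro N _ hN
    rcases Nat.eq_zero_or_pos ℓ with h0 | hpos
    · subst h0
      rw [T_one (by omega)]
      simp only [Nat.add_sub_cancel, pow_zero, one_mul]
      rw [show N - 1 + 1 = N by omega]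
    · have hNl : 1 ≤ N - ℓ := by omega
      have hstep : T N (ℓ+1) = ∑ k ∈ Icc 1 (N-ℓ), bb k * T (N-k) ℓ := by
        show (∑ k ∈ Icc 1 N, bb k * T (N-k) ℓ) = _
        symm
        apply Finset.sum_subset (Finset.Icc_subset_Icc le_rfl (by omega))
        intro k hk hknot
        simp only [Finset.mem_Icc] at hk hknot
        rw [T_lt_zero (show N - k < ℓ by omega)]
        ring
      rw [hstep]
      set S := N - ℓ + 1 with hS
      have hSS : 2 ≤ S := by omega
      calc ∑ k ∈ Icc 1 (N-ℓ), bb k * T (N-k) ℓ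
          ≤ ∑ k ∈ Icc 1 (N-ℓ), bb k * (9^(ℓ-1) * bb (N-k-ℓ+1)) := by
            apply Finset.sum_le_sum
            intro k hk
            simp only [Finset.mem_Icc] at hk
            exact Nat.mul_le_mul_left _ (ih hpos (by omega))
        _ = 9^(ℓ-1) * ∑ k ∈ Icc 1 (S-1), bb k * bb (S-k) := by
            rw [Finset.mul_sum]
            apply Finset.sum_congr (by rw [hS, Nat.add_sub_cancel])
            intro k hk
            simp only [Finset.mem_Icc] at hk
            rw [show N-k-ℓ+1 = S-k by omega]
            ring
        _ ≤ 9^(ℓ-1) * (9 * bb (S-1)) := Nat.mul_le_mul_left _ (PL hSS)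
        _ = 9^((ℓ+1)-1) * bb (N-(ℓ+1)+1) := by
            rw [show S - 1 = N - (ℓ+1) + 1 by omega, show (ℓ+1)-1 = (ℓ-1)+1 by omega,
              pow_succ, ← mul_assoc]

lemma master : 297^18 ≤ 2^23 * ∏ j ∈ Ico 1 19, (16*j+8) := by
  rw [Finset.prod_Ico_eq_prod_range]
  simp only [Finset.prod_range_succ, Finset.prod_range_zero]
  norm_num

lemma c1bound : ∀ {m r : ℕ}, 1 ≤ r → r ≤ m → 297^(m-r) ≤ 2^23 * ∏ j ∈ Ico r m, (16*j+8) := by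
  intro m
  induction m with
  | zero => intro r h1 h2; omega
  | succ m ih =>
    intro r h1 h2
    rcases Nat.lt_or_ge r (m+1) with hlt | hge
    · have hrm : r ≤ m := by omega
      rcases le_or_gt 19 m with h19 | h19
      · have hstep := ih h1 hrm
        calc 297^(m+1-r) = 297^(m-r) * 297 := by
              rw [← pow_succ]; congr 1; omega
          _ ≤ (2^23 * ∏ j ∈ Ico r m, (16*j+8)) * 297 :=
              Nat.mul_le_mul_right _ hstep
          _ ≤ (2^23 * ∏ j ∈ Ico r m, (16*j+8)) * (16*m+8) :=
              Nat.mul_le_mul_left _ (by omega)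
          _ = 2^23 * ∏ j ∈ Ico r (m+1), (16*j+8) := by
              rw [Finset.prod_Ico_succ_top hrm]; ring
      · set q := m + 1 with hq
        have hq19 : q ≤ 19 := by omega
        have hsplit1 : (∏ j ∈ Ico 1 r, (16*j+8)) * (∏ j ∈ Ico r 19, (16*j+8))
            = ∏ j ∈ Ico 1 19, (16*j+8) := Finset.prod_Ico_consecutive _ h1 (by omega)
        have hsplit2 : (∏ j ∈ Ico r q, (16*j+8)) * (∏ j ∈ Ico q 19, (16*j+8))
            = ∏ j ∈ Ico r 19, (16*j+8) := Finset.prod_Ico_consecutive _ (by omega) hq19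
        have hlow : (∏ j ∈ Ico 1 r, (16*j+8)) ≤ 297^(r-1) := by
          calc (∏ j ∈ Ico 1 r, (16*j+8)) ≤ ∏ _j ∈ Ico 1 r, 297 := by
                apply Finset.prod_le_prod'
                intro j hj
                simp only [Finset.mem_Ico] at hj
                omega
            _ = 297^(r-1) := by rw [Finset.prod_const, Nat.card_Ico]
        have hhigh : (∏ j ∈ Ico q 19, (16*j+8)) ≤ 297^(19-q) := by
          calc (∏ j ∈ Ico q 19, (16*j+8)) ≤ ∏ _j ∈ Ico q 19, 297 := by
                apply Finset.prod_le_prod'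
                intro j hj
                simp only [Finset.mem_Ico] at hj
                omega
            _ = 297^(19-q) := by rw [Finset.prod_const, Nat.card_Ico]
        have hchain : 297^18 ≤ 2^23 * (297^(r-1) * ((∏ j ∈ Ico r q, (16*j+8)) * 297^(19-q))) := by
          calc 297^18 ≤ 2^23 * ∏ j ∈ Ico 1 19, (16*j+8) := master
            _ = 2^23 * ((∏ j ∈ Ico 1 r, (16*j+8)) * ((∏ j ∈ Ico r q, (16*j+8)) * (∏ j ∈ Ico q 19, (16*j+8)))) := by
                rw [hsplit2, hsplit1]
            _ ≤ 2^23 * ((297^(r-1)) * ((∏ j ∈ Ico r q, (16*j+8)) * (297^(19-q)))) := by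
                apply Nat.mul_le_mul_left
                exact Nat.mul_le_mul hlow (Nat.mul_le_mul_left _ hhigh)
        have hpowsplit : 297^18 = 297^(q-r) * (297^(r-1) * 297^(19-q)) := by
          rw [← pow_add, ← pow_add]
          congr 1
          omega
        have hC : 0 < 297^(r-1) * 297^(19-q) := by positivity
        have hfin : 297^(q-r) * (297^(r-1) * 297^(19-q))
            ≤ (2^23 * ∏ j ∈ Ico r q, (16*j+8)) * (297^(r-1) * 297^(19-q)) := by
          rw [← hpowsplit]
          calc 297^18 ≤ 2^23 * (297^(r-1) * ((∏ j ∈ Ico r q, (16*j+8)) * 297^(19-q))) := hchain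
            _ = (2^23 * ∏ j ∈ Ico r q, (16*j+8)) * (297^(r-1) * 297^(19-q)) := by ring
        exact Nat.le_of_mul_le_mul_right hfin hC
    · have : r = m+1 := by omega
      simp [this]

lemma claimN {n ℓ : ℕ} (h2 : 2 ≤ ℓ) (hn : ℓ ≤ n) :
    33^ℓ * 9^(ℓ-1) * (n ! * bb (n-ℓ+1)) ≤ 2^32 * 4^ℓ * (2*n-1)! := by
  obtain ⟨l, rfl⟩ : ∃ l, ℓ = l + 2 := ⟨ℓ-2, by omega⟩
  set r := n - (l+2) + 1 with hr
  have hrn : r ≤ n := by omega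
  have hr1 : 1 ≤ r := by omega
  have hn2 : 2 ≤ n := by omega
  have he1 : l + 2 - 1 = l + 1 := by omega
  rw [he1]
  have key : 66*n * 297^(l+1) ≤ 2^34 * ∏ j ∈ Ico r n, (16*j+8) := by
    have hc1 := c1bound hr1 (show r ≤ n-1 by omega)
    have hexp : (n-1) - r = l := by omega
    rw [hexp] at hc1
    have hnum : 66*n*297 ≤ 2^11 * (16*(n-1)+8) := by
      have : 16*(n-1)+8 = 16*n - 8 := by omega
      omega
    calc 66*n * 297^(l+1) = (66*n*297) * 297^l := by
          rw [pow_succ']; ring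
      _ ≤ (2^11 * (16*(n-1)+8)) * (2^23 * ∏ j ∈ Ico r (n-1), (16*j+8)) :=
          Nat.mul_le_mul hnum hc1
      _ = 2^34 * ((∏ j ∈ Ico r (n-1), (16*j+8)) * (16*(n-1)+8)) := by ring
      _ = 2^34 * ∏ j ∈ Ico r n, (16*j+8) := by
          rw [← Finset.prod_Ico_succ_top (show r ≤ n-1 by omega)]
          rw [show n-1+1 = n by omega]
  have hcard : (Ico r n).card = l+1 := by rw [Nat.card_Ico]; omega
  have hprod16 : ∏ j ∈ Ico r n, (16*j+8) = 4^(l+1) * ∏ j ∈ Ico r n, (4*j+2) := by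
    calc ∏ j ∈ Ico r n, (16*j+8) = ∏ j ∈ Ico r n, (4 * (4*j+2)) := by
          apply Finset.prod_congr rfl
          intro j _
          ring
      _ = (∏ _j ∈ Ico r n, 4) * ∏ j ∈ Ico r n, (4*j+2) := by
          rw [← Finset.prod_mul_distrib]
      _ = 4^(l+1) * ∏ j ∈ Ico r n, (4*j+2) := by
          rw [Finset.prod_const, hcard]
  have hbbn : bb n = bb r * ∏ j ∈ Ico r n, (4*j+2) := bb_prod_Ico hrn
  have h2npos : 0 < 2*n := by omega
  refine Nat.le_of_mul_le_mul_right ?_ h2npos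
  have hA : (33:ℕ)^(l+2) * 9^(l+1) = 33 * 297^(l+1) := by
    rw [pow_succ' 33 (l+1), mul_assoc, ← mul_pow]
    norm_num
  have hfac : (2*n-1)! * (2*n) = (2*n)! := by
    rw [show 2*n = (2*n-1)+1 by omega, Nat.factorial_succ]
    rw [show 2*n-1+1-1 = 2*n-1 by omega]
    ring
  calc 33^(l+2) * 9^(l+1) * (n ! * bb r) * (2*n)
      = (66*n*297^(l+1)) * (n ! * bb r) := by rw [hA]; ring
    _ ≤ (2^34 * ∏ j ∈ Ico r n, (16*j+8)) * (n ! * bb r) :=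
        Nat.mul_le_mul_right _ key
    _ = 2^32 * 4^(l+2) * ((bb r * ∏ j ∈ Ico r n, (4*j+2)) * n !) := by
        rw [hprod16]
        ring
    _ = 2^32 * 4^(l+2) * (bb n * n !) := by rw [← hbbn]
    _ = 2^32 * 4^(l+2) * ((2*n)!) := by rw [bb_mul_factorial]
    _ = 2^32 * 4^(l+2) * (2*n-1)! * (2*n) := by rw [← hfac]; ring

lemma stepAlpha {n ℓ : ℕ} (h2 : 2 ≤ ℓ) (hn : ℓ ≤ n) :
    ∀ {M : ℕ}, 2*n ≤ M → (M-2*ℓ+2)! * (2*n-1)! ≤ (2*n-2*ℓ+2)! * (M-1)! := by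
  intro M
  induction M with
  | zero => intro h; omega
  | succ M ih =>
    intro h
    rcases Nat.lt_or_ge M (2*n) with hlt | hge
    · have : M + 1 = 2*n := by omega
      rw [this]
    · have hih := ih hge
      have e1 : M + 1 - 2*ℓ + 2 = (M - 2*ℓ + 2) + 1 := by omega
      have e2 : M + 1 - 1 = (M - 1) + 1 := by omega
      rw [e1, e2, Nat.factorial_succ, Nat.factorial_succ]
      calc (M - 2*ℓ + 2 + 1) * (M - 2*ℓ + 2)! * (2*n-1)!
          = (M - 2*ℓ + 2 + 1) * ((M - 2*ℓ + 2)! * (2*n-1)!) := by ring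
        _ ≤ (M - 2*ℓ + 2 + 1) * ((2*n-2*ℓ+2)! * (M-1)!) := Nat.mul_le_mul_left _ hih
        _ ≤ (M - 1 + 1) * ((2*n-2*ℓ+2)! * (M-1)!) := by
            apply Nat.mul_le_mul_right
            omega
        _ = (2*n-2*ℓ+2)! * ((M-1+1) * (M-1)!) := by ring

lemma teleSum : ∀ n : ℕ, (∑ ℓ ∈ Icc 2 n, (1:ℝ)/((ℓ:ℝ)*((ℓ:ℝ)-1))) ≤ 1 := by
  have key : ∀ n : ℕ, 1 ≤ n → (∑ ℓ ∈ Icc 2 n, (1:ℝ)/((ℓ:ℝ)*((ℓ:ℝ)-1))) = 1 - 1/(n:ℝ) := by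
    intro n
    induction n with
    | zero => omega
    | succ n ih =>
      intro _
      rcases Nat.eq_zero_or_pos n with h0 | hpos
      · subst h0
        norm_num
      · rw [Finset.sum_Icc_succ_top (by omega), ih hpos]
        have hn : (0:ℝ) < (n:ℝ) := by exact_mod_cast hpos
        have hn1 : (0:ℝ) < (n:ℝ) + 1 := by linarith
        push_cast
        have hn0 : (n:ℝ) ≠ 0 := hn.ne'
        rw [add_sub_cancel_right]
        field_simp
        ring
  intro n
  rcases Nat.lt_or_ge n 2 with h | h
  · interval_cases n <;> simp
  · rw [key n (by omega)]
    have hn : (0:ℝ) < (n:ℝ) := by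
      have : (0:ℕ) < n := by omega
      exact_mod_cast this
    have : (0:ℝ) ≤ 1/(n:ℝ) := by positivity
    linarith

lemma Esum : ∀ N : ℕ, (∑ j ∈ range N, 1/((j)! : ℝ)) ≤ 11/4 := by
  have key : ∀ j : ℕ, (∑ i ∈ range (4+j), 1/((i)! : ℝ)) + 1/(2*(((3+j))! : ℝ)) ≤ 11/4 := by
    intro j
    induction j with
    | zero =>
      simp only [Finset.sum_range_succ, Finset.sum_range_zero]
      norm_num [Nat.factorial]
    | succ j ih =>
      have hsplit : (∑ i ∈ range (4+(j+1)), 1/((i)! : ℝ))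
          = (∑ i ∈ range (4+j), 1/((i)! : ℝ)) + 1/(((4+j))! : ℝ) := by
        rw [show 4+(j+1) = (4+j)+1 by omega, Finset.sum_range_succ]
      rw [hsplit]
      have hkey : 1/(((4+j))! : ℝ) + 1/(2*(((3+(j+1)))! : ℝ)) ≤ 1/(2*(((3+j))! : ℝ)) := by
        rw [show 3+(j+1) = 4+j by omega]
        set x : ℝ := (((3+j))! : ℝ) with hx
        have hxpos : (0:ℝ) < x := by
          rw [hx]; exact_mod_cast Nat.factorial_pos _
        set a : ℝ := ((4+j : ℕ) : ℝ) with ha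
        have ha4 : (4:ℝ) ≤ a := by
          rw [ha]; exact_mod_cast (by omega : (4:ℕ) ≤ 4+j)
        have h4 : (((4+j))! : ℝ) = a * x := by
          rw [ha, hx]
          rw [show (4+j:ℕ) = (3+j)+1 by omega, Nat.factorial_succ]
          push_cast
          ring
        rw [h4]
        have e1 : 1/(a*x) ≤ 1/(3*x) :=
          one_div_le_one_div_of_le (by positivity) (by nlinarith)
        have e2 : 1/(2*(a*x)) ≤ 1/(2*(3*x)) :=
          one_div_le_one_div_of_le (by positivity) (by nlinarith)
        have e3 : 1/(3*x) + 1/(2*(3*x)) = 1/(2*x) := by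
          field_simp
          ring
        linarith
      linarith
  intro N
  rcases Nat.le_total N 4 with h | h
  · have hsub : (∑ j ∈ range N, 1/((j)! : ℝ)) ≤ ∑ j ∈ range 4, 1/((j)! : ℝ) := by
      apply Finset.sum_le_sum_of_subset_of_nonneg (Finset.range_subset_range.mpr h)
      intro i _ _
      positivity
    have h4 : (∑ j ∈ range 4, 1/((j)! : ℝ)) ≤ 11/4 := by
      simp only [Finset.sum_range_succ, Finset.sum_range_zero]
      norm_num [Nat.factorial]
    linarith
  · obtain ⟨j, rfl⟩ : ∃ j, N = 4 + j := ⟨N-4, by omega⟩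
    have hk := key j
    have hfp : (0:ℝ) < (((3+j))! : ℝ) := by exact_mod_cast Nat.factorial_pos _
    have : (0:ℝ) < 1/(2*(((3+j))! : ℝ)) := by positivity
    linarith

lemma merge {α : Type*} [DecidableEq α] (s : Finset α) (g : α → ℕ) (hc : 2 ≤ s.card)
    (hg2 : ∀ x ∈ s, 2 ≤ g x) :
    ∀ t (f : α → ℕ), (∀ x ∈ s, g x ≤ f x) → ((∑ x ∈ s, f x) = (∑ x ∈ s, g x) + t) →
    (∏ x ∈ s, (f x)!) * ((∑ x ∈ s, g x) - 2*(s.card - 1))!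
      ≤ ((∑ x ∈ s, f x) - 2*(s.card - 1))! * ∏ x ∈ s, (g x)! := by
  intro t
  induction t with
  | zero =>
    intro f hfg hsum
    have heq : ∀ x ∈ s, f x = g x := by
      by_contra hcon
      push_neg at hcon
      obtain ⟨x₀, hx₀s, hx₀⟩ := hcon
      have hlt : g x₀ < f x₀ := lt_of_le_of_ne (hfg x₀ hx₀s) (Ne.symm hx₀)
      have : (∑ x ∈ s, g x) < ∑ x ∈ s, f x :=
        Finset.sum_lt_sum (fun i hi => hfg i hi) ⟨x₀, hx₀s, hlt⟩
      omega
    have h1 : (∏ x ∈ s, (f x)!) = ∏ x ∈ s, (g x)! :=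
      Finset.prod_congr rfl (fun x hx => by rw [heq x hx])
    have h2 : (∑ x ∈ s, f x) = ∑ x ∈ s, g x := by omega
    rw [h1, h2, Nat.mul_comm]
  | succ t ih =>
    intro f hfg hsum
    have hex : ∃ x₀ ∈ s, g x₀ < f x₀ := by
      by_contra hcon
      push_neg at hcon
      have : (∑ x ∈ s, f x) ≤ ∑ x ∈ s, g x := Finset.sum_le_sum hcon
      omega
    obtain ⟨x₀, hx₀s, hx₀⟩ := hex
    set f' : α → ℕ := Function.update f x₀ (f x₀ - 1) with hf'
    have hf'x₀ : f' x₀ = f x₀ - 1 := Function.update_self x₀ (f x₀ - 1) f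
    have hf'ne : ∀ x, x ≠ x₀ → f' x = f x := fun x hx => Function.update_of_ne hx _ f
    have hfge : ∀ x ∈ s, g x ≤ f' x := by
      intro x hx
      rcases eq_or_ne x x₀ with rfl | hne
      · rw [hf'x₀]; omega
      · rw [hf'ne x hne]; exact hfg x hx
    have hsum_erase : (∑ x ∈ s, f x) = f x₀ + ∑ x ∈ s.erase x₀, f x :=
      (Finset.add_sum_erase s f hx₀s).symm
    have hsum'_erase : (∑ x ∈ s, f' x) = f' x₀ + ∑ x ∈ s.erase x₀, f' x :=
      (Finset.add_sum_erase s f' hx₀s).symm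
    have herase_eq : (∑ x ∈ s.erase x₀, f' x) = ∑ x ∈ s.erase x₀, f x :=
      Finset.sum_congr rfl (fun x hx => hf'ne x (Finset.ne_of_mem_erase hx))
    have hsum' : (∑ x ∈ s, f' x) = (∑ x ∈ s, g x) + t := by
      rw [hsum'_erase, herase_eq, hf'x₀]
      omega
    have hIH := ih f' hfge hsum'
    -- abbreviations
    set C : ℕ := ∑ x ∈ s, g x with hC
    set A : ℕ := ∑ x ∈ s, f x with hA
    have hA' : (∑ x ∈ s, f' x) = A - 1 := by omega
    rw [hA'] at hIH
    -- prod f! = f x₀ * prod f'!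
    have hprod : (∏ x ∈ s, (f x)!) = f x₀ * ∏ x ∈ s, (f' x)! := by
      rw [← Finset.mul_prod_erase s (fun x => (f x)!) hx₀s,
        ← Finset.mul_prod_erase s (fun x => (f' x)!) hx₀s]
      have hpe : (∏ x ∈ s.erase x₀, (f' x)!) = ∏ x ∈ s.erase x₀, (f x)! :=
        Finset.prod_congr rfl (fun x hx => by rw [hf'ne x (Finset.ne_of_mem_erase hx)])
      rw [hpe, hf'x₀]
      have : (f x₀)! = f x₀ * (f x₀ - 1)! := by
        rw [show f x₀ = (f x₀ - 1) + 1 by omega, Nat.factorial_succ]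
        congr 2 <;> omega
      rw [this]
      ring
    -- bound on f x₀
    have hsum_erase_ge : 2*(s.card - 1) ≤ ∑ x ∈ s.erase x₀, f x := by
      have hcard : (s.erase x₀).card = s.card - 1 := Finset.card_erase_of_mem hx₀s
      have h2le : ∀ x ∈ s.erase x₀, 2 ≤ f x := fun x hx =>
        le_trans (hg2 x (Finset.mem_of_mem_erase hx)) (hfg x (Finset.mem_of_mem_erase hx))
      calc 2*(s.card - 1) = (s.erase x₀).card * 2 := by rw [hcard]; ring
        _ ≤ ∑ x ∈ s.erase x₀, f x := by
            have := Finset.card_nsmul_le_sum (s.erase x₀) f 2 h2le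
            simpa [smul_eq_mul] using this
    have hfx₀le : f x₀ ≤ A - 2*(s.card - 1) := by omega
    have hCge : 2*s.card ≤ C := by
      calc 2*s.card = s.card * 2 := by ring
        _ ≤ C := by
            have := Finset.card_nsmul_le_sum s g 2 hg2
            simpa [smul_eq_mul] using this
    have hApos : 1 ≤ A - 2*(s.card - 1) := by omega
    have hfacA : (A - 2*(s.card - 1))! = (A - 2*(s.card - 1)) * ((A-1) - 2*(s.card - 1))! := by
      rw [show A - 2*(s.card - 1) = ((A-1) - 2*(s.card - 1)) + 1 by omega, Nat.factorial_succ]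
    calc (∏ x ∈ s, (f x)!) * (C - 2*(s.card - 1))!
        = f x₀ * ((∏ x ∈ s, (f' x)!) * (C - 2*(s.card - 1))!) := by rw [hprod]; ring
      _ ≤ f x₀ * (((A-1) - 2*(s.card - 1))! * ∏ x ∈ s, (g x)!) :=
          Nat.mul_le_mul_left _ hIH
      _ ≤ (A - 2*(s.card - 1)) * (((A-1) - 2*(s.card - 1))! * ∏ x ∈ s, (g x)!) :=
          Nat.mul_le_mul_right _ hfx₀le
      _ = (A - 2*(s.card - 1))! * ∏ x ∈ s, (g x)! := by
          rw [hfacA]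
          ring


section Partitions

variable {ι : Type*} [DecidableEq ι]

lemma part_disjoint {S : Finset ι} {P : Finset (Finset ι)} (hP : IsSetPartitionOn S P)
    {s t : Finset ι} (hs : s ∈ P) (ht : t ∈ P) (hne : s ≠ t) : Disjoint s t := by
  rw [Finset.disjoint_left]
  intro x hxs hxt
  have hxS : x ∈ S := (hP.1 s hs).1 hxs
  obtain ⟨u, _, hu⟩ := hP.2 x hxS
  have h1 := hu s ⟨hs, hxs⟩
  have h2 := hu t ⟨ht, hxt⟩
  exact hne (h1.trans h2.symm)

lemma part_biUnion {S : Finset ι} {P : Finset (Finset ι)} (hP : IsSetPartitionOn S P) :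
    P.biUnion id = S := by
  ext x
  simp only [Finset.mem_biUnion, id]
  constructor
  · rintro ⟨s, hs, hx⟩
    exact (hP.1 s hs).1 hx
  · intro hx
    obtain ⟨s, hs, _⟩ := hP.2 x hx
    exact ⟨s, hs.1, hs.2⟩

lemma part_sum {S : Finset ι} {P : Finset (Finset ι)} (hP : IsSetPartitionOn S P)
    (v : ι → ℕ) : ∑ s ∈ P, ∑ x ∈ s, v x = ∑ x ∈ S, v x := by
  have hdisj : (↑P : Set (Finset ι)).PairwiseDisjoint id := by
    intro s hs t ht hst
    exact part_disjoint hP (Finset.mem_coe.mp hs) (Finset.mem_coe.mp ht) hst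
  rw [← part_biUnion hP, Finset.sum_biUnion hdisj]
  rfl

lemma part_card_sum {S : Finset ι} {P : Finset (Finset ι)} (hP : IsSetPartitionOn S P) :
    ∑ s ∈ P, s.card = S.card := by
  have h := part_sum hP (fun _ => 1)
  calc ∑ s ∈ P, s.card = ∑ s ∈ P, ∑ _x ∈ s, 1 := by
        apply Finset.sum_congr rfl
        intro s _
        rw [Finset.card_eq_sum_ones]
    _ = ∑ _x ∈ S, 1 := h
    _ = S.card := (Finset.card_eq_sum_ones S).symm

lemma part_card_le {S : Finset ι} {P : Finset (Finset ι)} (hP : IsSetPartitionOn S P) :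
    P.card ≤ S.card := by
  rw [← part_card_sum hP, Finset.card_eq_sum_ones]
  apply Finset.sum_le_sum
  intro s hs
  have : s.Nonempty := Finset.nonempty_iff_ne_empty.mpr (hP.1 s hs).2
  exact Finset.card_pos.mpr this

lemma part_erase {S : Finset ι} {P : Finset (Finset ι)} (hP : IsSetPartitionOn S P)
    {t : Finset ι} (ht : t ∈ P) : IsSetPartitionOn (S \ t) (P.erase t) := by
  constructor
  · intro s hs
    have hsP : s ∈ P := Finset.mem_of_mem_erase hs
    have hsne : s ≠ t := Finset.ne_of_mem_erase hs
    refine ⟨?_, (hP.1 s hsP).2⟩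
    intro x hxs
    rw [Finset.mem_sdiff]
    refine ⟨(hP.1 s hsP).1 hxs, ?_⟩
    intro hxt
    exact (Finset.disjoint_left.mp (part_disjoint hP hsP ht hsne)) hxs hxt
  · intro x hx
    rw [Finset.mem_sdiff] at hx
    obtain ⟨s, ⟨hsP, hxs⟩, hu⟩ := hP.2 x hx.1
    have hsne : s ≠ t := by
      intro h
      exact hx.2 (h ▸ hxs)
    refine ⟨s, ⟨Finset.mem_erase.mpr ⟨hsne, hsP⟩, hxs⟩, ?_⟩
    intro u ⟨huP, hxu⟩
    exact hu u ⟨Finset.mem_of_mem_erase huP, hxu⟩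

end Partitions

section RRsec

variable {ι : Type*} [DecidableEq ι] [Fintype ι]

/-- sum over set partitions of `S` into `ℓ` blocks of `∏ (2|s|)!`. -/
noncomputable def RR (S : Finset ι) (ℓ : ℕ) : ℕ :=
  ∑ P ∈ univ.filter (fun P : Finset (Finset ι) => IsSetPartitionOn S P ∧ P.card = ℓ),
    ∏ s ∈ P, (2*s.card)!

lemma K1 (S : Finset ι) (ℓ : ℕ) :
    (ℓ+1) * RR S (ℓ+1) ≤
      ∑ t ∈ S.powerset.filter (fun t => t ≠ ∅), (2*t.card)! * RR (S \ t) ℓ := by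
  classical
  set F := univ.filter (fun P : Finset (Finset ι) => IsSetPartitionOn S P ∧ P.card = ℓ+1)
    with hF
  set w : Finset (Finset ι) → ℕ := fun P => ∏ s ∈ P, (2*s.card)! with hw
  have hL : (ℓ+1) * RR S (ℓ+1) = ∑ x ∈ F.sigma (fun P => P), w x.1 := by
    rw [Finset.sum_sigma]
    rw [RR, Finset.mul_sum]
    apply Finset.sum_congr rfl
    intro P hP
    simp only [hF, Finset.mem_filter] at hP
    show (ℓ + 1) * ∏ s ∈ P, (2 * s.card)! = ∑ _s ∈ P, w P
    rw [Finset.sum_const, hP.2.2, smul_eq_mul]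
  rw [hL]
  have hstep : ∀ x ∈ F.sigma (fun P => P),
      w x.1 = (2*(x.2.card))! * w (x.1.erase x.2) := by
    rintro ⟨P, t⟩ hx
    rw [Finset.mem_sigma] at hx
    exact (Finset.mul_prod_erase P (fun s => (2*s.card)!) hx.2).symm
  rw [Finset.sum_congr rfl hstep]
  set B := (S.powerset.filter (fun t => t ≠ ∅)).sigma
      (fun t => univ.filter
        (fun P : Finset (Finset ι) => IsSetPartitionOn (S \ t) P ∧ P.card = ℓ)) with hB
  have hR : (∑ t ∈ S.powerset.filter (fun t => t ≠ ∅), (2*t.card)! * RR (S \ t) ℓ)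
      = ∑ y ∈ B, (2*(y.1.card))! * w y.2 := by
    rw [Finset.sum_sigma]
    apply Finset.sum_congr rfl
    intro t _
    rw [RR, Finset.mul_sum]
  rw [hR]
  set i : (Σ _ : Finset (Finset ι), Finset ι) → (Σ _ : Finset ι, Finset (Finset ι)) :=
    fun x => ⟨x.2, x.1.erase x.2⟩ with hi
  have hinj : Set.InjOn i (F.sigma (fun P => P)) := by
    rintro ⟨P₁, t₁⟩ h1 ⟨P₂, t₂⟩ h2 heq
    simp only [hi, Sigma.mk.inj_iff] at heq
    obtain ⟨rfl, herase⟩ := heq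
    have herase' : P₁.erase t₁ = P₂.erase t₁ := by
      exact eq_of_heq herase
    rw [Finset.mem_coe, Finset.mem_sigma] at h1 h2
    have e1 : insert t₁ (P₁.erase t₁) = P₁ := Finset.insert_erase h1.2
    have e2 : insert t₁ (P₂.erase t₁) = P₂ := Finset.insert_erase h2.2
    have : P₁ = P₂ := by rw [← e1, ← e2, herase']
    subst this
    rfl
  have himg : ∀ x ∈ F.sigma (fun P => P), i x ∈ B := by
    rintro ⟨P, t⟩ hx
    rw [Finset.mem_sigma] at hx
    simp only [hF, Finset.mem_filter, Finset.mem_univ, true_and] at hx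
    obtain ⟨⟨hpart, hcard⟩, htP⟩ := hx
    simp only [hB, hi, Finset.mem_sigma, Finset.mem_filter, Finset.mem_univ, true_and,
      Finset.mem_powerset]
    refine ⟨⟨(hpart.1 t htP).1, (hpart.1 t htP).2⟩, part_erase hpart htP, ?_⟩
    rw [Finset.card_erase_of_mem htP, hcard]
    omega
  calc ∑ x ∈ F.sigma (fun P => P), (2*(x.2.card))! * w (x.1.erase x.2)
      = ∑ y ∈ (F.sigma (fun P => P)).image i, (2*(y.1.card))! * w y.2 := by
        rw [Finset.sum_image (fun x hx y hy h => hinj hx hy h)]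
    _ ≤ ∑ y ∈ B, (2*(y.1.card))! * w y.2 := by
        apply Finset.sum_le_sum_of_subset
        intro y hy
        rw [Finset.mem_image] at hy
        obtain ⟨x, hx, rfl⟩ := hy
        exact himg x hx

lemma K2 : ∀ (ℓ : ℕ) (S : Finset ι), RR S ℓ * ℓ ! ≤ S.card ! * T S.card ℓ := by
  intro ℓ
  induction ℓ with
  | zero =>
    intro S
    rcases eq_or_ne S ∅ with rfl | hne
    · have hsub : (univ.filter (fun P : Finset (Finset ι) =>
          IsSetPartitionOn (∅ : Finset ι) P ∧ P.card = 0)) ⊆ {∅} := by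
        intro P hP
        simp only [Finset.mem_filter] at hP
        rw [Finset.mem_singleton]
        exact Finset.card_eq_zero.mp hP.2.2
      have : RR (∅ : Finset ι) 0 ≤ ∑ P ∈ ({∅} : Finset (Finset (Finset ι))),
          ∏ s ∈ P, (2*s.card)! := Finset.sum_le_sum_of_subset hsub
      simp only [Finset.sum_singleton, Finset.prod_empty] at this
      simpa [T] using this
    · have hempty : (univ.filter (fun P : Finset (Finset ι) =>
          IsSetPartitionOn S P ∧ P.card = 0)) = ∅ := by
        apply Finset.filter_eq_empty_iff.mpr
        intro P _
        intro ⟨hpart, hcard⟩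
        have hP0 : P = ∅ := Finset.card_eq_zero.mp hcard
        obtain ⟨x, hx⟩ := Finset.nonempty_iff_ne_empty.mpr hne
        obtain ⟨s, hs, _⟩ := hpart.2 x hx
        rw [hP0] at hs
        exact absurd hs.1 (Finset.notMem_empty s)
      rw [RR, hempty]
      simp
  | succ ℓ ih =>
    intro S
    set N := S.card with hN
    have hK1 := K1 S ℓ
    have step1 : RR S (ℓ+1) * (ℓ+1)! = ((ℓ+1) * RR S (ℓ+1)) * ℓ ! := by
      rw [Nat.factorial_succ]
      ring
    rw [step1]
    calc ((ℓ+1) * RR S (ℓ+1)) * ℓ !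
        ≤ (∑ t ∈ S.powerset.filter (fun t => t ≠ ∅), (2*t.card)! * RR (S \ t) ℓ) * ℓ ! :=
          Nat.mul_le_mul_right _ hK1
      _ = ∑ t ∈ S.powerset.filter (fun t => t ≠ ∅), (2*t.card)! * (RR (S \ t) ℓ * ℓ !) := by
          rw [Finset.sum_mul]
          apply Finset.sum_congr rfl
          intro t _
          ring
      _ ≤ ∑ t ∈ S.powerset.filter (fun t => t ≠ ∅),
            (2*t.card)! * ((N - t.card)! * T (N - t.card) ℓ) := by
          apply Finset.sum_le_sum
          intro t ht
          simp only [Finset.mem_filter, Finset.mem_powerset] at ht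
          have hcs : (S \ t).card = N - t.card := Finset.card_sdiff_of_subset ht.1
          have := ih (S \ t)
          rw [hcs] at this
          exact Nat.mul_le_mul_left _ this
      _ = ∑ k ∈ Icc 1 N, ∑ t ∈ (S.powerset.filter (fun t => t ≠ ∅)).filter
            (fun t => t.card = k), (2*t.card)! * ((N - t.card)! * T (N - t.card) ℓ) := by
          rw [Finset.sum_fiberwise_of_maps_to]
          intro t ht
          simp only [Finset.mem_filter, Finset.mem_powerset] at ht
          rw [Finset.mem_Icc]
          constructor
          · rw [Nat.one_le_iff_ne_zero]
            simp only [ne_eq, Finset.card_eq_zero]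
            exact ht.2
          · exact Finset.card_le_card ht.1
      _ = ∑ k ∈ Icc 1 N, (N.choose k) * ((2*k)! * ((N - k)! * T (N - k) ℓ)) := by
          apply Finset.sum_congr rfl
          intro k hk
          simp only [Finset.mem_Icc] at hk
          have hset : (S.powerset.filter (fun t => t ≠ ∅)).filter (fun t => t.card = k)
              = S.powersetCard k := by
            ext t
            simp only [Finset.mem_filter, Finset.mem_powerset, Finset.mem_powersetCard]
            constructor
            · rintro ⟨⟨h1, _⟩, h3⟩
              exact ⟨h1, h3⟩
            · rintro ⟨h1, h2⟩
              refine ⟨⟨h1, ?_⟩, h2⟩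
              intro hemp
              rw [hemp] at h2
              simp at h2
              omega
          rw [hset]
          rw [Finset.sum_congr rfl (fun t ht => by
            rw [(Finset.mem_powersetCard.mp ht).2])]
          rw [Finset.sum_const, Finset.card_powersetCard, smul_eq_mul]
      _ = ∑ k ∈ Icc 1 N, N ! * (bb k * T (N - k) ℓ) := by
          apply Finset.sum_congr rfl
          intro k hk
          simp only [Finset.mem_Icc] at hk
          have hid : N.choose k * (2*k)! * (N-k)! = N ! * bb k := by
            have h1 : bb k * k ! = (2*k)! := bb_mul_factorial k
            have h2 : N.choose k * k ! * (N-k)! = N ! :=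
              Nat.choose_mul_factorial_mul_factorial hk.2
            calc N.choose k * (2*k)! * (N-k)! = N.choose k * (bb k * k !) * (N-k)! := by
                  rw [h1]
              _ = bb k * (N.choose k * k ! * (N-k)!) := by ring
              _ = N ! * bb k := by rw [h2]; ring
          calc (N.choose k) * ((2*k)! * ((N - k)! * T (N - k) ℓ))
              = (N.choose k * (2*k)! * (N-k)!) * T (N-k) ℓ := by ring
            _ = (N ! * bb k) * T (N-k) ℓ := by rw [hid]
            _ = N ! * (bb k * T (N - k) ℓ) := by ring
      _ = N ! * T N (ℓ+1) := by
          rw [← Finset.mul_sum]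
          rfl

end RRsec

section ZedBound

lemma tele_hasSum : HasSum (fun j : ℕ => 1/((j:ℝ)+1) - 1/((j:ℝ)+2)) 1 := by
  rw [hasSum_iff_tendsto_nat_of_nonneg]
  · have hps : ∀ N : ℕ, ∑ j ∈ range N, (1/((j:ℝ)+1) - 1/((j:ℝ)+2)) = 1 - 1/((N:ℝ)+1) := by
      intro N
      induction N with
      | zero => simp
      | succ N ih =>
        rw [Finset.sum_range_succ, ih]
        push_cast
        have h1 : ((N:ℝ)+1) ≠ 0 := by positivity
        have h2 : ((N:ℝ)+2) ≠ 0 := by positivity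
        field_simp
        ring
    simp only [hps]
    have h0 : Filter.Tendsto (fun N : ℕ => 1/((N:ℝ)+1)) Filter.atTop (nhds 0) :=
      tendsto_one_div_add_atTop_nhds_zero_nat
    have := Filter.Tendsto.const_sub (1:ℝ) h0
    simpa using this
  · intro j
    have h1 : (0:ℝ) < (j:ℝ)+1 := by positivity
    have h2 : (0:ℝ) < (j:ℝ)+2 := by positivity
    have : 1/((j:ℝ)+2) ≤ 1/((j:ℝ)+1) := by
      apply one_div_le_one_div_of_le h1
      linarith
    linarith

lemma sq_le_two_tele (j : ℕ) : ((j:ℝ)+1)^(-(2:ℤ)) ≤ 2 * (1/((j:ℝ)+1) - 1/((j:ℝ)+2)) := by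
  have h1 : (0:ℝ) < (j:ℝ)+1 := by positivity
  have h2 : (0:ℝ) < (j:ℝ)+2 := by positivity
  have htele : 1/((j:ℝ)+1) - 1/((j:ℝ)+2) = 1/(((j:ℝ)+1)*((j:ℝ)+2)) := by
    field_simp
    norm_num
  rw [htele, zpow_neg, zpow_two, inv_eq_one_div, mul_one_div]
  rw [div_le_div_iff₀ (by positivity) (by positivity)]
  nlinarith [Nat.cast_nonneg (α := ℝ) j]

lemma zpow_nonneg' (j : ℕ) (k : ℤ) : (0:ℝ) ≤ ((j:ℝ)+1)^(-k) := by
  apply zpow_nonneg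
  positivity

lemma summable_two : Summable (fun j : ℕ => ((j:ℝ)+1)^(-(2:ℤ))) := by
  apply Summable.of_nonneg_of_le (fun j => zpow_nonneg' j 2) sq_le_two_tele
  exact (tele_hasSum.summable).mul_left 2

lemma zeta_two_le : zetaSeries 2 ≤ 2 := by
  unfold zetaSeries
  calc ∑' j : ℕ, ((j:ℝ)+1)^(-(2:ℤ)) ≤ ∑' j : ℕ, 2 * (1/((j:ℝ)+1) - 1/((j:ℝ)+2)) := by
        apply Summable.tsum_le_tsum sq_le_two_tele summable_two
        exact (tele_hasSum.summable).mul_left 2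
    _ = 2 * ∑' j : ℕ, (1/((j:ℝ)+1) - 1/((j:ℝ)+2)) := by rw [tsum_mul_left]
    _ = 2 := by rw [tele_hasSum.tsum_eq]; norm_num

lemma zpow_anti {k k' : ℤ} (h : k ≤ k') (j : ℕ) : ((j:ℝ)+1)^(-k') ≤ ((j:ℝ)+1)^(-k) := by
  apply zpow_le_zpow_right₀
  · have : (0:ℝ) ≤ (j:ℝ) := Nat.cast_nonneg j
    linarith
  · omega

lemma summable_zk {k : ℤ} (hk : 2 ≤ k) : Summable (fun j : ℕ => ((j:ℝ)+1)^(-k)) :=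
  Summable.of_nonneg_of_le (fun j => zpow_nonneg' j k) (fun j => zpow_anti hk j) summable_two

lemma zeta_nonneg (k : ℤ) : 0 ≤ zetaSeries k := by
  unfold zetaSeries
  exact tsum_nonneg (fun j => zpow_nonneg' j k)

lemma zeta_le_two {k : ℤ} (hk : 2 ≤ k) : zetaSeries k ≤ 2 := by
  unfold zetaSeries
  calc ∑' j : ℕ, ((j:ℝ)+1)^(-k) ≤ ∑' j : ℕ, ((j:ℝ)+1)^(-(2:ℤ)) :=
        Summable.tsum_le_tsum (fun j => zpow_anti hk j) (summable_zk hk) summable_two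
    _ ≤ 2 := zeta_two_le

lemma zeta_le_of_four {k : ℤ} (hk : 4 ≤ k) : zetaSeries k ≤ 3/2 := by
  have hsum : Summable (fun j : ℕ => ((j:ℝ)+1)^(-k)) := summable_zk (by omega)
  unfold zetaSeries
  rw [Summable.tsum_eq_zero_add hsum]
  have hhead : (((0:ℕ):ℝ)+1)^(-k) = 1 := by norm_num
  rw [hhead]
  have hshift : ∀ j : ℕ, (((j+1:ℕ):ℝ)+1)^(-k) ≤ (1/4) * ((j:ℝ)+1)^(-(2:ℤ)) := by
    intro j
    have hj2 : (((j+1:ℕ):ℝ)+1) = (j:ℝ)+2 := by push_cast; ring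
    rw [hj2]
    have hjc : (0:ℝ) ≤ (j:ℝ) := Nat.cast_nonneg j
    have hb : (1:ℝ) ≤ (j:ℝ)+2 := by linarith
    have h1 : ((j:ℝ)+2)^(-k) ≤ ((j:ℝ)+2)^(-(4:ℤ)) := by
      apply zpow_le_zpow_right₀ hb
      omega
    have h2 : ((j:ℝ)+2)^(-(4:ℤ)) = (((j:ℝ)+2)^(4:ℕ))⁻¹ := by
      rw [zpow_neg]
      norm_cast
    have h3 : ((j:ℝ)+1)^(-(2:ℤ)) = (((j:ℝ)+1)^(2:ℕ))⁻¹ := by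
      rw [zpow_neg]
      norm_cast
    apply le_trans h1
    rw [h2, h3]
    rw [inv_eq_one_div, inv_eq_one_div]
    have h4 : (1:ℝ)/4 * (1/(((j:ℝ)+1)^(2:ℕ))) = 1/(4*((j:ℝ)+1)^(2:ℕ)) := by
      field_simp
    rw [h4]
    apply one_div_le_one_div_of_le (by positivity)
    have e1 : (0:ℝ) ≤ ((j:ℝ)+1) := by linarith
    nlinarith [sq_nonneg ((j:ℝ)+1), sq_nonneg ((j:ℝ)+2)]
  have hsum1 : Summable (fun j : ℕ => (((j+1:ℕ):ℝ)+1)^(-k)) := by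
    exact (summable_nat_add_iff 1).mpr hsum
  have hsum2 : Summable (fun j : ℕ => (1/4 : ℝ) * ((j:ℝ)+1)^(-(2:ℤ))) :=
    summable_two.mul_left _
  have htail : (∑' j : ℕ, (((j+1:ℕ):ℝ)+1)^(-k)) ≤ ∑' j : ℕ, (1/4 : ℝ) * ((j:ℝ)+1)^(-(2:ℤ)) :=
    Summable.tsum_le_tsum hshift hsum1 hsum2
  have hq : (∑' j : ℕ, (1/4 : ℝ) * ((j:ℝ)+1)^(-(2:ℤ))) = (1/4) * ∑' j : ℕ, ((j:ℝ)+1)^(-(2:ℤ)) :=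
    tsum_mul_left
  have hS2 : (∑' j : ℕ, ((j:ℝ)+1)^(-(2:ℤ))) ≤ 2 := zeta_two_le
  have hS2' : (0:ℝ) ≤ ∑' j : ℕ, ((j:ℝ)+1)^(-(2:ℤ)) := tsum_nonneg (fun j => zpow_nonneg' j 2)
  rw [hq] at htail
  linarith

lemma zed_abs (k : ℤ) : |zed k| ≤ 3 := by
  unfold zed
  split_ifs with h0 h2
  · norm_num
  · obtain ⟨hk2, hkeven⟩ := h2
    have hcoefpos : (0:ℝ) ≤ 2 - (2:ℝ)^(2-k) := by
      have : (2:ℝ)^(2-k) ≤ 1 := zpow_le_one_of_nonpos₀ (by norm_num) (by omega)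
      linarith
    have hcoefle : 2 - (2:ℝ)^(2-k) ≤ 2 := by
      have : (0:ℝ) < (2:ℝ)^(2-k) := by positivity
      linarith
    have hznn : 0 ≤ zetaSeries k := zeta_nonneg k
    rw [abs_of_nonneg (mul_nonneg hcoefpos hznn)]
    rcases eq_or_ne k 2 with rfl | hne
    · have : (2:ℝ) - 2^(2-(2:ℤ)) = 1 := by norm_num
      rw [this, one_mul]
      linarith [zeta_two_le]
    · have hk4 : 4 ≤ k := by
        obtain ⟨t, rfl⟩ := hkeven
        omega
      have := zeta_le_of_four hk4
      nlinarith
  · simp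

end ZedBound

section Dsum

variable {α : Type*} [DecidableEq α]

lemma dsum_le (P : Finset α) (k : ℕ) :
    ∑ d ∈ Finset.finsuppAntidiag P k, ∏ s ∈ P, 1/(((d s))! : ℝ) ≤ (11/4)^(P.card) := by
  classical
  set ψ : (α →₀ ℕ) → (↥P → ℕ) := fun d => (fun s => d s.1) with hψ
  have hd_le : ∀ d ∈ Finset.finsuppAntidiag P k, ∀ s : ↥P, d s.1 ∈ range (k+1) := by
    intro d hd s
    rw [Finset.mem_finsuppAntidiag] at hd
    rw [Finset.mem_range]
    have hsumk : (∑ x ∈ P, d x) = k := hd.1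
    have : d s.1 ≤ ∑ x ∈ P, d x := Finset.single_le_sum (fun x _ => Nat.zero_le _) s.2
    omega
  have hinj : Set.InjOn ψ (Finset.finsuppAntidiag P k) := by
    intro d1 h1 d2 h2 heq
    rw [Finset.mem_coe, Finset.mem_finsuppAntidiag] at h1 h2
    ext x
    by_cases hx : x ∈ P
    · exact congr_fun heq ⟨x, hx⟩
    · have e1 : d1 x = 0 := Finsupp.notMem_support_iff.mp (fun hc => hx (h1.2 hc))
      have e2 : d2 x = 0 := Finsupp.notMem_support_iff.mp (fun hc => hx (h2.2 hc))
      rw [e1, e2]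
  have hprod : ∀ d : α →₀ ℕ, (∏ s ∈ P, 1/(((d s))! : ℝ))
      = ∏ s : ↥P, 1/(((ψ d s))! : ℝ) := by
    intro d
    rw [Finset.univ_eq_attach]
    exact (Finset.prod_attach P (fun x => 1/(((d x))! : ℝ))).symm
  calc ∑ d ∈ Finset.finsuppAntidiag P k, ∏ s ∈ P, 1/(((d s))! : ℝ)
      = ∑ d ∈ Finset.finsuppAntidiag P k, ∏ s : ↥P, 1/(((ψ d s))! : ℝ) := by
        apply Finset.sum_congr rfl
        intro d _
        exact hprod d
    _ = ∑ p ∈ (Finset.finsuppAntidiag P k).image ψ, ∏ s : ↥P, 1/(((p s))! : ℝ) := by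
        rw [Finset.sum_image (fun x hx y hy h => hinj hx hy h)]
    _ ≤ ∑ p ∈ Fintype.piFinset (fun _ : ↥P => range (k+1)), ∏ s : ↥P, 1/(((p s))! : ℝ) := by
        apply Finset.sum_le_sum_of_subset_of_nonneg
        · intro p hp
          rw [Finset.mem_image] at hp
          obtain ⟨d, hd, rfl⟩ := hp
          rw [Fintype.mem_piFinset]
          intro s
          exact hd_le d hd s
        · intro p _ _
          apply Finset.prod_nonneg
          intro s _
          positivity
    _ = ∏ s : ↥P, ∑ c ∈ range (k+1), 1/((c)! : ℝ) := by
        rw [Finset.prod_univ_sum]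
    _ ≤ ∏ _s : ↥P, (11/4 : ℝ) := by
        apply Finset.prod_le_prod
        · intro s _
          apply Finset.sum_nonneg
          intro c _
          positivity
        · intro s _
          exact Esum (k+1)
    _ = (11/4)^(P.card) := by
        rw [Finset.prod_const]
        congr 1
        exact Finset.card_univ.trans (Fintype.card_coe P)

end Dsum

section PerP

variable {ι : Type*} [Fintype ι] [DecidableEq ι]

lemma perP (v : ι → ℕ) (P : Finset (Finset ι)) :
    |(-1 : ℝ) ^ (P.card - 1) * ((P.card - 2)! : ℝ) *
      ∑ d ∈ Finset.finsuppAntidiag P (P.card - 2),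
        ∏ s ∈ P,
          (1 / ((d s)! : ℝ) * ((∑ x ∈ s, v x)! : ℝ) *
            zed ((∑ x ∈ s, v x : ℤ) - s.card - d s + 1))|
    ≤ ((P.card - 2)! : ℝ) * (33/4)^(P.card) * ((∏ s ∈ P, (∑ x ∈ s, v x)! : ℕ) : ℝ) := by
  set ℓ := P.card with hℓ
  set A : ℝ := ((∏ s ∈ P, (∑ x ∈ s, v x)! : ℕ) : ℝ) with hA
  have hAcast : A = ∏ s ∈ P, ((∑ x ∈ s, v x)! : ℝ) := by
    rw [hA]
    push_cast
    rfl
  have hAnn : 0 ≤ A := by rw [hA]; positivity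
  rw [abs_mul, abs_mul]
  have h1 : |(-1 : ℝ) ^ (ℓ - 1)| = 1 := by
    rw [abs_pow, abs_neg, abs_one, one_pow]
  have h2 : |((ℓ - 2)! : ℝ)| = ((ℓ - 2)! : ℝ) := abs_of_nonneg (by positivity)
  rw [h1, h2, one_mul]
  have hinner : |∑ d ∈ Finset.finsuppAntidiag P (ℓ - 2),
        ∏ s ∈ P, (1 / ((d s)! : ℝ) * ((∑ x ∈ s, v x)! : ℝ) *
          zed ((∑ x ∈ s, v x : ℤ) - s.card - d s + 1))|
      ≤ (33/4)^ℓ * A := by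
    calc |∑ d ∈ Finset.finsuppAntidiag P (ℓ - 2),
          ∏ s ∈ P, (1 / ((d s)! : ℝ) * ((∑ x ∈ s, v x)! : ℝ) *
            zed ((∑ x ∈ s, v x : ℤ) - s.card - d s + 1))|
        ≤ ∑ d ∈ Finset.finsuppAntidiag P (ℓ - 2),
          |∏ s ∈ P, (1 / ((d s)! : ℝ) * ((∑ x ∈ s, v x)! : ℝ) *
            zed ((∑ x ∈ s, v x : ℤ) - s.card - d s + 1))| := Finset.abs_sum_le_sum_abs _ _
      _ ≤ ∑ d ∈ Finset.finsuppAntidiag P (ℓ - 2),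
          (3^ℓ * A * ∏ s ∈ P, 1/((d s)! : ℝ)) := by
          apply Finset.sum_le_sum
          intro d _
          rw [Finset.abs_prod]
          calc ∏ s ∈ P, |1 / ((d s)! : ℝ) * ((∑ x ∈ s, v x)! : ℝ) *
                zed ((∑ x ∈ s, v x : ℤ) - s.card - d s + 1)|
              ≤ ∏ s ∈ P, (1 / ((d s)! : ℝ) * ((∑ x ∈ s, v x)! : ℝ) * 3) := by
                apply Finset.prod_le_prod
                · intro s _
                  positivity
                · intro s _
                  rw [abs_mul, abs_mul]
                  have e1 : |1 / ((d s)! : ℝ)| = 1 / ((d s)! : ℝ) :=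
                    abs_of_nonneg (by positivity)
                  have e2 : |((∑ x ∈ s, v x)! : ℝ)| = ((∑ x ∈ s, v x)! : ℝ) :=
                    abs_of_nonneg (by positivity)
                  rw [e1, e2]
                  apply mul_le_mul_of_nonneg_left (zed_abs _) (by positivity)
            _ = 3^ℓ * A * ∏ s ∈ P, 1/((d s)! : ℝ) := by
                rw [Finset.prod_mul_distrib, Finset.prod_mul_distrib, Finset.prod_const,
                  hAcast]
                ring
      _ = 3^ℓ * A * ∑ d ∈ Finset.finsuppAntidiag P (ℓ - 2), ∏ s ∈ P, 1/((d s)! : ℝ) := by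
          rw [← Finset.mul_sum]
      _ ≤ 3^ℓ * A * (11/4)^ℓ := by
          apply mul_le_mul_of_nonneg_left (dsum_le P (ℓ-2)) (by positivity)
      _ = (33/4)^ℓ * A := by
          rw [show (33/4 : ℝ) = 3 * (11/4) by norm_num, mul_pow]
          ring
  calc ((ℓ - 2)! : ℝ) * |∑ d ∈ Finset.finsuppAntidiag P (ℓ - 2),
        ∏ s ∈ P, (1 / ((d s)! : ℝ) * ((∑ x ∈ s, v x)! : ℝ) *
          zed ((∑ x ∈ s, v x : ℤ) - s.card - d s + 1))|
      ≤ ((ℓ - 2)! : ℝ) * ((33/4)^ℓ * A) :=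
        mul_le_mul_of_nonneg_left hinner (by positivity)
    _ = ((ℓ - 2)! : ℝ) * (33/4)^ℓ * A := by ring

end PerP

end EOaux

set_option maxHeartbeats 2000000 in
/-- Let `n` be a positive integer and `m = (m₁, …, m_n)` an `n`-tuple
of integers with every `m_i ≥ 2`.  Then `|E(m)| ≤ 2^{40} · (|m| − 1)!`. -/
theorem abs_Emap_le_of_two_le (n : ℕ) (hn : 0 < n) (m : Fin n → ℕ) (hm : ∀ i, 2 ≤ m i) :
    |Emap Finset.univ m| ≤ 2 ^ 40 * (((∑ i, m i) - 1)! : ℝ) := by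
  classical
  set M := ∑ i, m i with hM
  have hcardU : (Finset.univ : Finset (Fin n)).card = n := by simp
  have hMn : 2*n ≤ M := by
    rw [hM]
    calc 2*n = ∑ _i : Fin n, 2 := by
          rw [Finset.sum_const, hcardU, smul_eq_mul]
          ring
      _ ≤ ∑ i, m i := Finset.sum_le_sum (fun i _ => hm i)
  set F := Finset.univ.filter
      (fun P : Finset (Finset (Fin n)) => IsSetPartitionOn Finset.univ P ∧ 2 ≤ P.card) with hF
  set g : Finset (Finset (Fin n)) → ℝ := fun P =>
    (((P.card - 2)! : ℝ) * (33/4)^(P.card) *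
      ((∏ s ∈ P, (∑ x ∈ s, m x)! : ℕ) : ℝ)) with hg
  have h1 : |Emap Finset.univ m| ≤ ∑ P ∈ F, g P := by
    rw [Emap]
    refine le_trans (Finset.abs_sum_le_sum_abs _ _) ?_
    apply Finset.sum_le_sum
    intro P _
    exact EOaux.perP m P
  have hPfacts : ∀ P ∈ F, IsSetPartitionOn (Finset.univ : Finset (Fin n)) P ∧ 2 ≤ P.card := by
    intro P hP
    rw [hF, Finset.mem_filter] at hP
    exact hP.2
  have hmap : ∀ P ∈ F, P.card ∈ Icc 2 n := by
    intro P hP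
    obtain ⟨hpart, h2c⟩ := hPfacts P hP
    rw [Finset.mem_Icc]
    refine ⟨h2c, ?_⟩
    calc P.card ≤ (Finset.univ : Finset (Fin n)).card := EOaux.part_card_le hpart
      _ = n := hcardU
  have hregroup : ∑ P ∈ F, g P
      = ∑ ℓ ∈ Icc 2 n, ∑ P ∈ F.filter (fun P => P.card = ℓ), g P :=
    (Finset.sum_fiberwise_of_maps_to hmap _).symm
  have hperl : ∀ ℓ ∈ Icc 2 n, (∑ P ∈ F.filter (fun P => P.card = ℓ), g P)
      ≤ (1/((ℓ:ℝ)*((ℓ:ℝ)-1))) * (2^32 * ((M-1)! : ℝ)) := by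
    intro ℓ hℓ
    rw [Finset.mem_Icc] at hℓ
    obtain ⟨h2ℓ, hℓn⟩ := hℓ
    set Fl := Finset.univ.filter
      (fun P : Finset (Finset (Fin n)) => IsSetPartitionOn Finset.univ P ∧ P.card = ℓ) with hFl
    have hFeq : F.filter (fun P => P.card = ℓ) = Fl := by
      ext P
      rw [hF, hFl, Finset.mem_filter, Finset.mem_filter, Finset.mem_filter]
      constructor
      · rintro ⟨⟨hu, hpart, h2c⟩, hc⟩
        exact ⟨hu, hpart, hc⟩
      · rintro ⟨hu, hpart, hc⟩
        exact ⟨⟨hu, hpart, by omega⟩, hc⟩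
    set X : ℕ := ∑ P ∈ Fl, ∏ s ∈ P, (∑ x ∈ s, m x)! with hX
    have hsum_g : (∑ P ∈ F.filter (fun P => P.card = ℓ), g P)
        = ((ℓ - 2)! : ℝ) * (33/4)^ℓ * (X:ℝ) := by
      rw [hFeq]
      have : ∀ P ∈ Fl, g P
          = ((ℓ - 2)! : ℝ) * (33/4)^ℓ * ((∏ s ∈ P, (∑ x ∈ s, m x)! : ℕ) : ℝ) := by
        intro P hP
        rw [hFl, Finset.mem_filter] at hP
        simp only [hg]
        rw [hP.2.2]
      rw [Finset.sum_congr rfl this, ← Finset.mul_sum, hX]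
      push_cast
      rfl
    -- the crucial nat inequality chain
    have hN1 : X * (2*n-2*ℓ+2)! ≤ (M-2*ℓ+2)! * EOaux.RR (Finset.univ : Finset (Fin n)) ℓ := by
      unfold EOaux.RR
      rw [← hFl, hX, Finset.sum_mul, Finset.mul_sum]
      apply Finset.sum_le_sum
      intro P hP
      rw [hFl, Finset.mem_filter] at hP
      obtain ⟨_, hpart, hcard⟩ := hP
      have hg2 : ∀ s ∈ P, 2 ≤ 2*s.card := by
        intro s hs
        have : s.Nonempty := Finset.nonempty_iff_ne_empty.mpr (hpart.1 s hs).2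
        have := Finset.card_pos.mpr this
        omega
      have hfg : ∀ s ∈ P, 2*s.card ≤ ∑ x ∈ s, m x := by
        intro s hs
        calc 2*s.card = ∑ _x ∈ s, 2 := by
              rw [Finset.sum_const, smul_eq_mul]
              ring
          _ ≤ ∑ x ∈ s, m x := Finset.sum_le_sum (fun x _ => hm x)
      have hgsum : ∑ s ∈ P, 2*s.card = 2*n := by
        rw [← Finset.mul_sum, EOaux.part_card_sum hpart, hcardU]
      have hfsum : ∑ s ∈ P, ∑ x ∈ s, m x = M := by
        rw [EOaux.part_sum hpart m, hM]
      have hfgsum : (∑ s ∈ P, ∑ x ∈ s, m x) = (∑ s ∈ P, 2*s.card) + (M - 2*n) := by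
        rw [hgsum, hfsum]
        omega
      have hmerge := EOaux.merge P (fun s => 2*s.card) (by omega : 2 ≤ P.card) hg2
        (M - 2*n) (fun s => ∑ x ∈ s, m x) hfg hfgsum
      rw [hgsum, hfsum, hcard] at hmerge
      have e1 : 2*n - 2*(ℓ-1) = 2*n-2*ℓ+2 := by omega
      have e2 : M - 2*(ℓ-1) = M-2*ℓ+2 := by omega
      rw [e1, e2] at hmerge
      exact hmerge
    have hRT := EOaux.K2 ℓ (Finset.univ : Finset (Fin n))
    rw [hcardU] at hRT
    have hTle := EOaux.T_le (show 1 ≤ ℓ by omega) hℓn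
    have hCN := EOaux.claimN h2ℓ hℓn
    have hSA := EOaux.stepAlpha h2ℓ hℓn hMn
    set R : ℕ := EOaux.RR (Finset.univ : Finset (Fin n)) ℓ with hR
    set r : ℕ := n - ℓ + 1 with hr
    have hfinal : X * ℓ ! * 33^ℓ ≤ 2^32 * 4^ℓ * (M-1)! := by
      have hposC : 0 < (2*n-2*ℓ+2)! * (2*n-1)! :=
        Nat.mul_pos (Nat.factorial_pos _) (Nat.factorial_pos _)
      refine Nat.le_of_mul_le_mul_right ?_ hposC
      calc (X * ℓ ! * 33^ℓ) * ((2*n-2*ℓ+2)! * (2*n-1)!)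
          = (X * (2*n-2*ℓ+2)!) * (ℓ ! * 33^ℓ * (2*n-1)!) := by ring
        _ ≤ ((M-2*ℓ+2)! * R) * (ℓ ! * 33^ℓ * (2*n-1)!) :=
            Nat.mul_le_mul_right _ hN1
        _ = (R * ℓ !) * ((M-2*ℓ+2)! * (33^ℓ * (2*n-1)!)) := by ring
        _ ≤ (n ! * EOaux.T n ℓ) * ((M-2*ℓ+2)! * (33^ℓ * (2*n-1)!)) :=
            Nat.mul_le_mul_right _ hRT
        _ ≤ (n ! * (9^(ℓ-1) * EOaux.bb r)) * ((M-2*ℓ+2)! * (33^ℓ * (2*n-1)!)) :=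
            Nat.mul_le_mul_right _ (Nat.mul_le_mul_left _ hTle)
        _ = (33^ℓ * 9^(ℓ-1) * (n ! * EOaux.bb r)) * ((M-2*ℓ+2)! * (2*n-1)!) := by ring
        _ ≤ (2^32 * 4^ℓ * (2*n-1)!) * ((M-2*ℓ+2)! * (2*n-1)!) :=
            Nat.mul_le_mul_right _ hCN
        _ = (2^32 * 4^ℓ) * ((M-2*ℓ+2)! * (2*n-1)!) * (2*n-1)! := by ring
        _ ≤ (2^32 * 4^ℓ) * ((2*n-2*ℓ+2)! * (M-1)!) * (2*n-1)! :=
            Nat.mul_le_mul_right _ (Nat.mul_le_mul_left _ hSA)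
        _ = (2^32 * 4^ℓ * (M-1)!) * ((2*n-2*ℓ+2)! * (2*n-1)!) := by ring
    -- go to the reals
    have hcast : (X:ℝ) * ((ℓ ! : ℕ):ℝ) * 33^ℓ ≤ 2^32 * 4^ℓ * (((M-1)! : ℕ) : ℝ) := by
      exact_mod_cast hfinal
    have hposl : (0:ℝ) < (ℓ:ℝ)*((ℓ:ℝ)-1) := by
      have h2 : (2:ℝ) ≤ (ℓ:ℝ) := by exact_mod_cast h2ℓ
      nlinarith
    have hfact : ((ℓ ! : ℕ):ℝ) = (ℓ:ℝ)*((ℓ:ℝ)-1)*(((ℓ-2)! : ℕ) : ℝ) := by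
      have hnat : ℓ ! = ℓ * ((ℓ-1) * (ℓ-2)!) := by
        have e1 : ℓ-1+1 = ℓ := by omega
        have e2 : ℓ-2+1 = ℓ-1 := by omega
        calc ℓ ! = (ℓ-1+1)! := by rw [e1]
          _ = (ℓ-1+1) * (ℓ-1)! := Nat.factorial_succ _
          _ = ℓ * (ℓ-1)! := by rw [e1]
          _ = ℓ * ((ℓ-2+1))! := by rw [e2]
          _ = ℓ * ((ℓ-2+1) * (ℓ-2)!) := by rw [Nat.factorial_succ]
          _ = ℓ * ((ℓ-1) * (ℓ-2)!) := by rw [e2]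
      rw [hnat]
      have h1ℓ : (1:ℕ) ≤ ℓ := by omega
      push_cast [Nat.cast_sub h1ℓ]
      ring
    rw [hsum_g, one_div_mul_eq_div, le_div_iff₀ hposl]
    calc ((ℓ - 2)! : ℝ) * (33/4)^ℓ * (X:ℝ) * ((ℓ:ℝ)*((ℓ:ℝ)-1))
        = ((X:ℝ) * ((ℓ ! : ℕ):ℝ) * 33^ℓ) / 4^ℓ := by
          rw [hfact, div_pow]
          field_simp
      _ ≤ (2^32 * 4^ℓ * (((M-1)! : ℕ) : ℝ)) / 4^ℓ := by
          rw [div_le_div_iff_of_pos_right (by positivity : (0:ℝ) < (4:ℝ)^ℓ)]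
          exact hcast
      _ = 2^32 * (((M-1)! : ℕ) : ℝ) := by
          field_simp
  calc |Emap Finset.univ m| ≤ ∑ P ∈ F, g P := h1
    _ = ∑ ℓ ∈ Icc 2 n, ∑ P ∈ F.filter (fun P => P.card = ℓ), g P := hregroup
    _ ≤ ∑ ℓ ∈ Icc 2 n, (1/((ℓ:ℝ)*((ℓ:ℝ)-1))) * (2^32 * ((M-1)! : ℝ)) :=
        Finset.sum_le_sum hperl
    _ = (∑ ℓ ∈ Icc 2 n, 1/((ℓ:ℝ)*((ℓ:ℝ)-1))) * (2^32 * ((M-1)! : ℝ)) := by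
        rw [Finset.sum_mul]
    _ ≤ 1 * (2^32 * ((M-1)! : ℝ)) := by
        apply mul_le_mul_of_nonneg_right (EOaux.teleSum n) (by positivity)
    _ ≤ 2 ^ 40 * (((M) - 1)! : ℝ) := by
        rw [one_mul]
        have : (0:ℝ) ≤ (((M-1)! : ℕ) : ℝ) := by positivity
        nlinarith
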